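/- Let (E, f) be a polymatroid. Then the collection I_f := {F ⊆ E : |I| ≤ f(I) for all I ⊆ F} is the family of independent sets of a matroid on E, and the rank function of this matroid is r_f(F) = min{|F ∖ I| + f(I) : I ⊆ F} for every F ⊆ E. -/

import Mathlib

open Finset

/-- Weak direction: any independent `J ⊆ F` has `|J| ≤ |F \ I| + f I` for any `I ⊆ F`. -/
lemma poly_weak {α : Type*} [DecidableEq α] (f : Finset α → ℤ)
    (hmono : ∀ X Y : Finset α, X ⊆ Y → f X ≤ f Y)
    {F J I : Finset α} (hJF : J ⊆ F) (hJ : ∀ K ⊆ J, (K.card : ℤ) ≤ f K) :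
    (J.card : ℤ) ≤ ((F \ I).card : ℤ) + f I := by
  have h1 : (J \ I).card + (J ∩ I).card = J.card := Finset.card_sdiff_add_card_inter J I
  have h2 : (J \ I).card ≤ (F \ I).card :=
    Finset.card_le_card (Finset.sdiff_subset_sdiff hJF le_rfl)
  have h3 : ((J ∩ I).card : ℤ) ≤ f (J ∩ I) := hJ _ Finset.inter_subset_left
  have h4 : f (J ∩ I) ≤ f I := hmono _ _ Finset.inter_subset_right
  have := h3.trans h4
  omega

/-- Core lemma: if `J ⊆ F` is independent and maximal in `F`, then some `I ⊆ F` attains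
`|F \ I| + f I ≤ |J|`. -/
lemma poly_core {α : Type*} [DecidableEq α] (f : Finset α → ℤ)
    (hsub : ∀ X Y : Finset α, f (X ∪ Y) + f (X ∩ Y) ≤ f X + f Y)
    (hmono : ∀ X Y : Finset α, X ⊆ Y → f X ≤ f Y)
    (hempty : f ∅ = 0)
    {F J : Finset α} (hJF : J ⊆ F) (hJ : ∀ K ⊆ J, (K.card : ℤ) ≤ f K)
    (hmax : ∀ e ∈ F, e ∉ J → ¬ (∀ K ⊆ insert e J, (K.card : ℤ) ≤ f K)) :
    ∃ I ⊆ F, ((F \ I).card : ℤ) + f I ≤ J.card := by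
  set g : Finset α → ℤ := fun S => f S - ((S ∩ J).card : ℤ) with hg
  have hg0 : ∀ S, 0 ≤ g S := by
    intro S
    have h1 : ((S ∩ J).card : ℤ) ≤ f (S ∩ J) := hJ _ Finset.inter_subset_right
    have h2 : f (S ∩ J) ≤ f S := hmono _ _ Finset.inter_subset_left
    simp only [hg]; omega
  have hgsub : ∀ X Y, g (X ∪ Y) + g (X ∩ Y) ≤ g X + g Y := by
    intro X Y
    have hmod : ((X ∪ Y) ∩ J).card + ((X ∩ Y) ∩ J).card = (X ∩ J).card + (Y ∩ J).card := by
      rw [Finset.union_inter_distrib_right, Finset.inter_inter_distrib_right]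
      exact Finset.card_union_add_card_inter _ _
    have := hsub X Y
    simp only [hg]; omega
  -- choose tight sets
  have hA : ∀ e : α, ∃ A : Finset α, e ∈ F \ J → (A ⊆ F ∧ e ∈ A ∧ g A ≤ 0) := by
    intro e
    by_cases he : e ∈ F \ J
    · obtain ⟨heF, heJ⟩ := Finset.mem_sdiff.1 he
      have := hmax e heF heJ
      push_neg at this
      obtain ⟨A, hAsub, hAf⟩ := this
      have heA : e ∈ A := by
        by_contra heA
        have : A ⊆ J := fun x hx => by
          rcases Finset.mem_insert.1 (hAsub hx) with h | h
          · exact absurd (h ▸ hx) heA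
          · exact h
        exact absurd (hJ A this) (not_le.2 hAf)
      have hAJ : A ∩ J = A.erase e := by
        ext x
        simp only [Finset.mem_inter, Finset.mem_erase]
        constructor
        · rintro ⟨hxA, hxJ⟩; exact ⟨fun h => heJ (h ▸ hxJ), hxA⟩
        · rintro ⟨hxe, hxA⟩
          refine ⟨hxA, ?_⟩
          rcases Finset.mem_insert.1 (hAsub hxA) with h | h
          · exact absurd h hxe
          · exact h
      have hcard : (A.erase e).card = A.card - 1 := Finset.card_erase_of_mem heA
      have hAc : 1 ≤ A.card := Finset.card_pos.2 ⟨e, heA⟩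
      refine ⟨A, fun _ => ⟨hAsub.trans ?_, heA, ?_⟩⟩
      · exact Finset.insert_subset heF hJF
      · simp only [hg, hAJ, hcard]
        have : ((A.card : ℤ) - 1 : ℤ) = ((A.card - 1 : ℕ) : ℤ) := by omega
        omega
    · exact ⟨∅, fun h => absurd h he⟩
  choose A hAspec using hA
  -- union over s of tight sets is tight
  have hunion : ∀ s : Finset α, (∀ e ∈ s, g (A e) ≤ 0) → g (s.biUnion A) ≤ 0 := by
    intro s
    induction s using Finset.induction_on with
    | empty => intro _; simp [hg, hempty]
    | insert a s hnotmem ih =>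
      intro h
      rw [Finset.biUnion_insert]
      have h1 : g (A a) ≤ 0 := h a (Finset.mem_insert_self a s)
      have h2 : g (s.biUnion A) ≤ 0 := ih fun e he => h e (Finset.mem_insert_of_mem he)
      have := hgsub (A a) (s.biUnion A)
      have := hg0 (A a ∩ s.biUnion A)
      omega
  set I : Finset α := (F \ J).biUnion A with hI
  have hIF : I ⊆ F := by
    intro x hx
    obtain ⟨e, he, hxe⟩ := Finset.mem_biUnion.1 hx
    exact (hAspec e he).1 hxe
  have hFJI : F \ J ⊆ I := by
    intro e he
    exact Finset.mem_biUnion.2 ⟨e, he, (hAspec e he).2.1⟩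
  have hgI : g I ≤ 0 := hunion _ fun e he => (hAspec e he).2.2
  refine ⟨I, hIF, ?_⟩
  have hFI : F \ I ⊆ J \ I := by
    intro x hx
    obtain ⟨hxF, hxI⟩ := Finset.mem_sdiff.1 hx
    refine Finset.mem_sdiff.2 ⟨?_, hxI⟩
    by_contra hxJ
    exact hxI (hFJI (Finset.mem_sdiff.2 ⟨hxF, hxJ⟩))
  have h1 : (F \ I).card ≤ (J \ I).card := Finset.card_le_card hFI
  have h2 : (J \ I).card + (J ∩ I).card = J.card := Finset.card_sdiff_add_card_inter J I
  have h3 : f I ≤ ((I ∩ J).card : ℤ) := by simp only [hg] at hgI; omega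
  have h4 : I ∩ J = J ∩ I := Finset.inter_comm I J
  rw [h4] at h3
  omega

/-- Let `(E, f)` be a polymatroid (here the ground set `E` is the whole
finite type `α`).  Then `{F ⊆ E : |I| ≤ f(I) for all I ⊆ F}` is the family of independent
sets of a matroid on `E`, and the rank of any `F` in this matroid (the maximum cardinality
of an independent subset of `F`) equals `min {|F \ I| + f(I) : I ⊆ F}`. -/
theorem stmt0 {α : Type*} [Fintype α] [DecidableEq α] (f : Finset α → ℤ)
    (hsub : ∀ X Y : Finset α, f (X ∪ Y) + f (X ∩ Y) ≤ f X + f Y)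
    (hmono : ∀ X Y : Finset α, X ⊆ Y → f X ≤ f Y)
    (hempty : f ∅ = 0) :
    ∃ M : Matroid α, M.E = Set.univ ∧
      (∀ F : Finset α, M.Indep ↑F ↔ ∀ I ⊆ F, (I.card : ℤ) ≤ f I) ∧
      (∀ F : Finset α,
        (∃ J ⊆ F, M.Indep ↑J ∧
            (J.card : ℤ) = sInf {s : ℤ | ∃ I ⊆ F, s = ((F \ I).card : ℤ) + f I}) ∧
        (∀ J ⊆ F, M.Indep ↑J →
            (J.card : ℤ) ≤ sInf {s : ℤ | ∃ I ⊆ F, s = ((F \ I).card : ℤ) + f I})) := by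
  classical
  set Ind : Finset α → Prop := fun F => ∀ I ⊆ F, (I.card : ℤ) ≤ f I with hInd
  have indep_empty : Ind ∅ := by
    intro I hI
    rw [Finset.subset_empty.1 hI]
    simp [hempty]
  have indep_subset : ∀ ⦃I J : Finset α⦄, Ind J → I ⊆ J → Ind I :=
    fun I J hJ hIJ K hK => hJ K (hK.trans hIJ)
  have indep_aug : ∀ ⦃I J : Finset α⦄, Ind I → Ind J → I.card < J.card →
      ∃ e ∈ J, e ∉ I ∧ Ind (insert e I) := by
    intro I J hI hJ hcard
    by_contra hcon
    push_neg at hcon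
    have hmax : ∀ e ∈ I ∪ J, e ∉ I → ¬ (∀ K ⊆ insert e I, (K.card : ℤ) ≤ f K) := by
      intro e he heI
      rcases Finset.mem_union.1 he with h | h
      · exact absurd h heI
      · exact hcon e h heI
    obtain ⟨I', hI'sub, hI'⟩ :=
      poly_core f hsub hmono hempty Finset.subset_union_left hI hmax
    have := poly_weak f hmono (F := I ∪ J) (I := I') Finset.subset_union_right hJ
    omega
  have subset_ground : ∀ ⦃I : Finset α⦄, Ind I → (I : Set α) ⊆ Set.univ :=
    fun _ _ => Set.subset_univ _
  refine ⟨(IndepMatroid.ofFinset Set.univ Ind indep_empty indep_subset indep_aug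
      subset_ground).matroid, rfl, ?_, ?_⟩
  · intro F
    exact IndepMatroid.ofFinset_indep Set.univ Ind indep_empty indep_subset indep_aug
      subset_ground
  · intro F
    set S : Set ℤ := {s : ℤ | ∃ I ⊆ F, s = ((F \ I).card : ℤ) + f I} with hS
    have hSne : S.Nonempty := ⟨((F \ F).card : ℤ) + f F, F, le_rfl, rfl⟩
    -- choose a maximum-cardinality independent subset J of F
    obtain ⟨J, hJmem, hJmax⟩ := Finset.exists_max_image
      ((F.powerset).filter Ind) Finset.card ⟨∅, by simpa using indep_empty⟩
    simp only [Finset.mem_filter, Finset.mem_powerset] at hJmem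
    obtain ⟨hJF, hJ⟩ := hJmem
    have hJlb : ∀ s ∈ S, (J.card : ℤ) ≤ s := by
      rintro s ⟨I, hIF, rfl⟩
      exact poly_weak f hmono hJF hJ
    have hmax : ∀ e ∈ F, e ∉ J → ¬ (∀ K ⊆ insert e J, (K.card : ℤ) ≤ f K) := by
      intro e heF heJ hind
      have hmem : insert e J ∈ (F.powerset).filter Ind := by
        simp only [Finset.mem_filter, Finset.mem_powerset]
        exact ⟨Finset.insert_subset heF hJF, hind⟩
      have := hJmax _ hmem
      rw [Finset.card_insert_of_notMem heJ] at this
      omega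
    obtain ⟨I, hIF, hIle⟩ := poly_core f hsub hmono hempty hJF hJ hmax
    have hmemS : ((F \ I).card : ℤ) + f I ∈ S := ⟨I, hIF, rfl⟩
    have hsInf : sInf S = (J.card : ℤ) := by
      refine le_antisymm ((csInf_le ⟨_, hJlb⟩ hmemS).trans hIle) (le_csInf hSne hJlb)
    have hindep : ∀ K : Finset α, (IndepMatroid.ofFinset Set.univ Ind indep_empty
        indep_subset indep_aug subset_ground).matroid.Indep ↑K ↔ Ind K :=
      fun K => IndepMatroid.ofFinset_indep Set.univ Ind indep_empty indep_subset indep_aug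
        subset_ground
    refine ⟨⟨J, hJF, (hindep J).2 hJ, hsInf.symm⟩, ?_⟩
    intro J' hJ'F hJ'
    rw [hsInf]
    have hJ'ind : Ind J' := (hindep J').1 hJ'
    have hmem' : J' ∈ (F.powerset).filter Ind := by
      simp only [Finset.mem_filter, Finset.mem_powerset]; exact ⟨hJ'F, hJ'ind⟩
    exact_mod_cast hJmax _ hmem'
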